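/- arXiv:2307.06894 — 3 statements merged into one kernel-verified Lean document; each statement's English description precedes it below -/
import Mathlib

section
/- Let K be a finite-dimensional complex inner product space of dimension d, and let r_1, r_2 ∈ {0,1,…,d} and c ≥ 0. The set G_{r_1,r_2,c} of pairs of orthogonal projectors (P_1, P_2) on K with rank(P_1) = r_1, rank(P_2) = r_2, and tr|P_1 P_2| ≤ c is nonempty if and only if r_1 + r_2 − d ≤ ⌊c⌋. -/
open Finset Matrix
open scoped Kronecker ComplexOrder

/-- `x` majorizes `y`: every subset-sum of `y` is dominated by some subset-sum of `x`
of the same cardinality (equivalently, all top-`k` partial sums of the non-increasing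
rearrangements dominate), and the total sums agree. -/
def Majorizes {ι κ : Type*} [Fintype ι] [Fintype κ] (x : ι → ℝ) (y : κ → ℝ) : Prop :=
  (∀ t : Finset κ, ∃ s : Finset ι, s.card = t.card ∧ ∑ j ∈ t, y j ≤ ∑ i ∈ s, x i) ∧
    ∑ j, y j = ∑ i, x i
/-- The trace norm `tr √(M* M)` (sum of singular values) of a matrix. -/
noncomputable def traceNorm {m n : Type*} [Fintype m] [Fintype n] [DecidableEq n]
    (M : Matrix m n ℂ) : ℝ :=
  ∑ i, Real.sqrt ((Matrix.isHermitian_conjTranspose_mul_self M).eigenvalues i)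

/-- An orthogonal projector: a self-adjoint idempotent. -/
def IsProjector {m : Type*} [Fintype m] [DecidableEq m] (P : Matrix m m ℂ) : Prop :=
  P.IsHermitian ∧ P * P = P

section Aux
variable {n : Type*} [Fintype n] [DecidableEq n]

lemma trace_eq_sum_eigs {A : Matrix n n ℂ} (hA : A.IsHermitian) :
    A.trace = ∑ i, (hA.eigenvalues i : ℂ) := by
  conv_lhs => rw [hA.spectral_theorem]
  rw [Unitary.conjStarAlgAut_apply, Matrix.trace_mul_cycle,
    Matrix.mem_unitaryGroup_iff'.mp (hA.eigenvectorUnitary).2, one_mul, Matrix.trace_diagonal]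
  rfl

lemma eigs_idem {A : Matrix n n ℂ} (hA : A.IsHermitian) (h2 : A * A = A) (i : n) :
    hA.eigenvalues i = 0 ∨ hA.eigenvalues i = 1 := by
  set μ := hA.eigenvalues i with hμ
  set v : n → ℂ := ⇑(hA.eigenvectorBasis i) with hvdef
  have hv : A *ᵥ v = μ • v := hA.mulVec_eigenvectorBasis i
  have h : (μ * μ) • v = μ • v := by
    calc (μ * μ) • v = μ • (μ • v) := by rw [smul_smul]
    _ = μ • (A *ᵥ v) := by rw [hv]
    _ = A *ᵥ (μ • v) := (A.mulVec_smul μ v).symm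
    _ = A *ᵥ (A *ᵥ v) := by rw [hv]
    _ = (A * A) *ᵥ v := mulVec_mulVec v A A
    _ = μ • v := by rw [h2, hv]
  have hne : v ≠ 0 := by
    intro h0
    exact hA.eigenvectorBasis.orthonormal.ne_zero i (by ext j; exact congrFun h0 j)
  have : (μ * μ - μ) • v = 0 := by rw [sub_smul, h, sub_self]
  rcases smul_eq_zero.mp this with h' | h'
  · have : μ * (μ - 1) = 0 := by linarith [h', mul_sub μ μ 1, mul_one μ]
    rcases mul_eq_zero.mp this with h'' | h''
    · exact Or.inl h''
    · exact Or.inr (by linarith)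
  · exact absurd h' hne

lemma eigs_le_one {A : Matrix n n ℂ} (hA : A.IsHermitian) (h1 : (1 - A).PosSemidef) (i : n) :
    hA.eigenvalues i ≤ 1 := by
  set μ := hA.eigenvalues i with hμ
  set v : n → ℂ := ⇑(hA.eigenvectorBasis i) with hvdef
  have hv : A *ᵥ v = μ • v := hA.mulVec_eigenvectorBasis i
  have hvv : star v ⬝ᵥ v = (1 : ℂ) := by
    have h1' : (inner ℂ (hA.eigenvectorBasis i) (hA.eigenvectorBasis i) : ℂ) = 1 := by
      rw [inner_self_eq_norm_sq_to_K, hA.eigenvectorBasis.orthonormal.1 i]; norm_num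
    rw [PiLp.inner_apply] at h1'
    simpa [dotProduct, Complex.conj_mul', hvdef] using h1'
  have h := h1.dotProduct_mulVec_nonneg v
  rw [sub_mulVec, one_mulVec, dotProduct_sub, hv, dotProduct_smul, hvv] at h
  have h' : (0:ℂ) ≤ ((1 - μ : ℝ) : ℂ) := by
    convert h using 1
    push_cast
    rw [Complex.real_smul, mul_one]
  have := Complex.zero_le_real.mp h'
  linarith

lemma proj_psd {P : Matrix n n ℂ} (h : IsProjector P) : P.PosSemidef := by
  have hp : P = Pᴴ * P := by rw [h.1.eq, h.2]
  rw [hp]; exact posSemidef_conjTranspose_mul_self P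

lemma proj_one_sub {P : Matrix n n ℂ} (h : IsProjector P) : IsProjector (1 - P) := by
  refine ⟨?_, ?_⟩
  · unfold Matrix.IsHermitian
    rw [conjTranspose_sub, conjTranspose_one, h.1.eq]
  · calc (1 - P) * (1 - P) = 1 - P - P + P * P := by noncomm_ring
    _ = 1 - P := by rw [h.2]; abel

lemma one_sub_sandwich_psd {P Q : Matrix n n ℂ} (hP : IsProjector P) (hQ : IsProjector Q) :
    (1 - Q * P * Q).PosSemidef := by
  have h1 : Q * (1 - P) * Q = Q - Q * P * Q := by
    rw [mul_sub, mul_one, sub_mul, hQ.2]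
  have key : 1 - Q * P * Q = (1 - Q) + Qᴴ * (1 - P) * Q := by
    rw [hQ.1.eq, h1]; abel
  rw [key]
  exact (proj_psd (proj_one_sub hQ)).add
    ((proj_psd (proj_one_sub hP)).conjTranspose_mul_mul_same Q)

lemma sum_eigs_eq_card {A : Matrix n n ℂ} (hA : A.IsHermitian) (h2 : A * A = A) :
    ∑ i, hA.eigenvalues i = (Fintype.card {i // hA.eigenvalues i ≠ 0} : ℝ) := by
  rw [Fintype.card_subtype]
  calc ∑ i, hA.eigenvalues i
      = ∑ i ∈ Finset.univ.filter (fun i => hA.eigenvalues i ≠ 0), hA.eigenvalues i :=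
        (Finset.sum_filter_of_ne (fun i _ hne => hne)).symm
    _ = ∑ i ∈ Finset.univ.filter (fun i => hA.eigenvalues i ≠ 0), 1 := by
        refine Finset.sum_congr rfl (fun i hi => ?_)
        rcases eigs_idem hA h2 i with h0 | h1
        · exact absurd h0 (Finset.mem_filter.mp hi).2
        · exact h1
    _ = _ := by simp

lemma trace_proj {P : Matrix n n ℂ} (h : IsProjector P) : P.trace = (P.rank : ℂ) := by
  rw [trace_eq_sum_eigs h.1, h.1.rank_eq_card_non_zero_eigs]
  rw [← Complex.ofReal_natCast, ← sum_eigs_eq_card h.1 h.2]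
  push_cast
  rfl

lemma retrace_le_rank {B : Matrix n n ℂ} (hB : B.IsHermitian)
    (h1 : (1 - B).PosSemidef) (h0 : B.PosSemidef) : B.trace.re ≤ (B.rank : ℝ) := by
  rw [trace_eq_sum_eigs hB, Complex.re_sum, hB.rank_eq_card_non_zero_eigs, Fintype.card_subtype]
  simp only [Complex.ofReal_re]
  calc ∑ i, hB.eigenvalues i
      = ∑ i ∈ Finset.univ.filter (fun i => hB.eigenvalues i ≠ 0), hB.eigenvalues i :=
        (Finset.sum_filter_of_ne (fun i _ hne => hne)).symm
    _ ≤ ∑ i ∈ Finset.univ.filter (fun i => hB.eigenvalues i ≠ 0), 1 :=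
        Finset.sum_le_sum (fun i _ => eigs_le_one hB h1 i)
    _ = _ := by simp

lemma rank_one_sub_le {P : Matrix n n ℂ} (h : IsProjector P) :
    (1 - P).rank ≤ Fintype.card n - P.rank := by
  have hsub : LinearMap.range (1 - P).mulVecLin ≤ LinearMap.ker P.mulVecLin := by
    rintro x ⟨y, rfl⟩
    simp only [LinearMap.mem_ker, mulVecLin_apply, mulVec_mulVec]
    have hz : P * (1 - P) = 0 := by rw [mul_sub, mul_one, h.2, sub_self]
    rw [hz, zero_mulVec]
  have hle : (1 - P).rank ≤ Module.finrank ℂ (LinearMap.ker P.mulVecLin) := by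
    rw [Matrix.rank]; exact Submodule.finrank_mono hsub
  have h2 := LinearMap.finrank_range_add_finrank_ker P.mulVecLin
  have h3 : Module.finrank ℂ (n → ℂ) = Fintype.card n := Module.finrank_pi ℂ
  rw [h3] at h2
  have h4 : P.rank = Module.finrank ℂ (LinearMap.range P.mulVecLin) := rfl
  omega

lemma traceNorm_eq_of_idem {M : Matrix n n ℂ} (h2 : (Mᴴ * M) * (Mᴴ * M) = Mᴴ * M) :
    traceNorm M = ((Mᴴ * M).trace).re := by
  rw [traceNorm, trace_eq_sum_eigs (Matrix.isHermitian_conjTranspose_mul_self M), Complex.re_sum]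
  refine Finset.sum_congr rfl (fun i _ => ?_)
  simp only [Complex.ofReal_re]
  rcases eigs_idem (Matrix.isHermitian_conjTranspose_mul_self M) h2 i with h0 | h1
  · rw [h0, Real.sqrt_zero]
  · rw [h1, Real.sqrt_one]

lemma retrace_le_traceNorm {M : Matrix n n ℂ} (h1 : (1 - Mᴴ * M).PosSemidef) :
    ((Mᴴ * M).trace).re ≤ traceNorm M := by
  rw [traceNorm, trace_eq_sum_eigs (Matrix.isHermitian_conjTranspose_mul_self M), Complex.re_sum]
  refine Finset.sum_le_sum (fun i _ => ?_)
  simp only [Complex.ofReal_re]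
  have h0 := Matrix.eigenvalues_conjTranspose_mul_self_nonneg M i
  have hle := eigs_le_one (Matrix.isHermitian_conjTranspose_mul_self M) h1 i
  nlinarith [Real.sq_sqrt h0, Real.sqrt_nonneg ((Matrix.isHermitian_conjTranspose_mul_self M).eigenvalues i)]

lemma card_between (d a b : ℕ) (hb : b ≤ d) :
    Fintype.card {i : Fin d // a ≤ (i : ℕ) ∧ (i : ℕ) < b} = b - a := by
  rw [← Fintype.card_fin (b - a)]
  refine Fintype.card_congr
    { toFun := fun i => ⟨(i : Fin d).1 - a, by have := i.2; omega⟩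
      invFun := fun j => ⟨⟨j.1 + a, by have := j.isLt; omega⟩, by simp; have := j.isLt; omega⟩
      left_inv := fun i => by
        ext
        have := i.2
        simp
        omega
      right_inv := fun j => by
        ext
        have := j.isLt
        simp }

end Aux

/-- the set `G_{r₁,r₂,c}` of pairs of projectors with ranks `r₁, r₂` and
`tr|P₁P₂| ≤ c` is nonempty iff `r₁ + r₂ - d ≤ ⌊c⌋`. -/
theorem projector_pairs_nonempty_iff {dK : ℕ} (r₁ r₂ : ℕ)
    (hr₁ : r₁ ≤ dK) (hr₂ : r₂ ≤ dK) (c : ℝ) (hc : 0 ≤ c) :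
    (∃ P₁ P₂ : Matrix (Fin dK) (Fin dK) ℂ, IsProjector P₁ ∧ IsProjector P₂ ∧
      P₁.rank = r₁ ∧ P₂.rank = r₂ ∧ traceNorm (P₁ * P₂) ≤ c) ↔
    (r₁ : ℤ) + (r₂ : ℤ) - (dK : ℤ) ≤ ⌊c⌋ := by
  constructor
  · rintro ⟨P₁, P₂, h₁, h₂, hrk₁, hrk₂, hN⟩
    rw [Int.le_floor]
    push_cast
    set M := P₁ * P₂ with hMdef
    have hMM : Mᴴ * M = P₂ * P₁ * P₂ := by
      rw [hMdef, conjTranspose_mul, h₁.1.eq, h₂.1.eq]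
      calc P₂ * P₁ * (P₁ * P₂) = P₂ * (P₁ * P₁) * P₂ := by noncomm_ring
      _ = P₂ * P₁ * P₂ := by rw [h₁.2]
    have hpsd1 : (1 - Mᴴ * M).PosSemidef := by
      rw [hMM]; exact one_sub_sandwich_psd h₁ h₂
    have hTN := retrace_le_traceNorm hpsd1
    set Q : Matrix (Fin dK) (Fin dK) ℂ := 1 - P₂ with hQdef
    have hQ : IsProjector Q := proj_one_sub h₂
    have e1 : (P₂ * P₁ * P₂).trace = (P₁ * P₂).trace := by
      rw [trace_mul_cycle, h₂.2, trace_mul_comm]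
    have e2 : (Q * P₁ * Q).trace = (P₁ * Q).trace := by
      rw [trace_mul_cycle, hQ.2, trace_mul_comm]
    have e3 : (P₁ * Q).trace = P₁.trace - (P₁ * P₂).trace := by
      rw [hQdef, mul_sub, mul_one, trace_sub]
    have htr : (Mᴴ * M).trace = P₁.trace - (Q * P₁ * Q).trace := by
      rw [hMM, e1, e2, e3]; ring
    have hBpsd : (Q * P₁ * Q).PosSemidef := by
      have := (proj_psd h₁).conjTranspose_mul_mul_same Q
      rwa [hQ.1.eq] at this
    have hB := retrace_le_rank hBpsd.1 (one_sub_sandwich_psd h₁ hQ) hBpsd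
    have hrank : (Q * P₁ * Q).rank ≤ dK - r₂ := by
      calc (Q * P₁ * Q).rank = (Q * (P₁ * Q)).rank := by rw [mul_assoc]
      _ ≤ Q.rank := Matrix.rank_mul_le_left Q (P₁ * Q)
      _ ≤ Fintype.card (Fin dK) - P₂.rank := rank_one_sub_le h₂
      _ = dK - r₂ := by rw [Fintype.card_fin, hrk₂]
    have hcast : ((dK - r₂ : ℕ) : ℝ) = (dK : ℝ) - r₂ := by
      rw [Nat.cast_sub hr₂]
    have htrP₁ : P₁.trace = (r₁ : ℂ) := by rw [trace_proj h₁, hrk₁]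
    have hfinal : (r₁ : ℝ) - ((dK : ℝ) - r₂) ≤ ((Mᴴ * M).trace).re := by
      rw [htr, Complex.sub_re, htrP₁]
      have hle2 : ((Q * P₁ * Q).trace).re ≤ ((dK - r₂ : ℕ) : ℝ) :=
        le_trans hB (by exact_mod_cast Nat.cast_le.mpr hrank)
      rw [hcast] at hle2
      simp only [Complex.natCast_re]
      linarith
    have hNc : traceNorm M ≤ c := hN
    linarith
  · intro hfl
    have hfl0 : 0 ≤ ⌊c⌋ := Int.floor_nonneg.mpr hc
    set a := dK - r₂ with ha
    set w₁ : Fin dK → ℂ := fun i => if (i : ℕ) < r₁ then 1 else 0 with hw₁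
    set w₂ : Fin dK → ℂ := fun i => if a ≤ (i : ℕ) then 1 else 0 with hw₂
    set u : Fin dK → ℂ := fun i => if a ≤ (i : ℕ) ∧ (i : ℕ) < r₁ then 1 else 0 with hu
    have hsa₁ : star w₁ = w₁ := by
      funext i; simp only [Pi.star_apply, hw₁]; split <;> simp
    have hsa₂ : star w₂ = w₂ := by
      funext i; simp only [Pi.star_apply, hw₂]; split <;> simp
    have hmul₁ : (fun i => w₁ i * w₁ i) = w₁ := by
      funext i; simp only [hw₁]; split <;> simp
    have hmul₂ : (fun i => w₂ i * w₂ i) = w₂ := by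
      funext i; simp only [hw₂]; split <;> simp
    have hp₁ : IsProjector (diagonal w₁) :=
      ⟨isHermitian_diagonal_of_self_adjoint _ hsa₁, by rw [diagonal_mul_diagonal, hmul₁]⟩
    have hp₂ : IsProjector (diagonal w₂) :=
      ⟨isHermitian_diagonal_of_self_adjoint _ hsa₂, by rw [diagonal_mul_diagonal, hmul₂]⟩
    have hM : diagonal w₁ * diagonal w₂ = diagonal u := by
      rw [diagonal_mul_diagonal]
      refine congrArg diagonal (funext fun i => ?_)
      simp only [Pi.mul_apply, hw₁, hw₂, hu]
      by_cases h1 : (i : ℕ) < r₁ <;> by_cases h2 : a ≤ (i : ℕ) <;> simp [h1, h2]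
    have hNherm : (diagonal u)ᴴ = diagonal u := by
      rw [diagonal_conjTranspose]
      refine congrArg diagonal (funext fun i => ?_)
      simp only [Pi.star_apply, hu]
      split <;> simp
    have hNidem : diagonal u * diagonal u = diagonal u := by
      rw [diagonal_mul_diagonal]
      refine congrArg diagonal (funext fun i => ?_)
      simp only [Pi.mul_apply, hu]
      split <;> simp
    refine ⟨diagonal w₁, diagonal w₂, hp₁, hp₂, ?_, ?_, ?_⟩
    · rw [Matrix.rank_diagonal]
      have hiff : ∀ i : Fin dK, w₁ i ≠ 0 ↔ 0 ≤ (i : ℕ) ∧ (i : ℕ) < r₁ := by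
        intro i
        simp only [hw₁]
        split <;> simp_all
      rw [Fintype.card_congr (Equiv.subtypeEquivRight hiff), card_between dK 0 r₁ hr₁]
      omega
    · rw [Matrix.rank_diagonal]
      have hiff : ∀ i : Fin dK, w₂ i ≠ 0 ↔ a ≤ (i : ℕ) ∧ (i : ℕ) < dK := by
        intro i
        have := i.isLt
        simp only [hw₂]
        split <;> simp_all
      rw [Fintype.card_congr (Equiv.subtypeEquivRight hiff), card_between dK a dK le_rfl]
      omega
    · rw [hM]
      have hidem : ((diagonal u)ᴴ * diagonal u) * ((diagonal u)ᴴ * diagonal u)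
          = (diagonal u)ᴴ * diagonal u := by
        rw [hNherm, hNidem, hNidem]
      rw [traceNorm_eq_of_idem hidem, hNherm, hNidem, trace_diagonal]
      have hsum : ∑ i, u i
          = ((Finset.univ.filter (fun i : Fin dK => a ≤ (i : ℕ) ∧ (i : ℕ) < r₁)).card : ℂ) := by
        simp only [hu]
        exact Finset.sum_boole _ _
      have hcard : (Finset.univ.filter (fun i : Fin dK => a ≤ (i : ℕ) ∧ (i : ℕ) < r₁)).card
          = r₁ - a := by
        rw [← Fintype.card_subtype]
        exact card_between dK a r₁ hr₁
      rw [hsum, hcard]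
      simp only [Complex.natCast_re]
      have hZ : ((r₁ - a : ℕ) : ℤ) ≤ ⌊c⌋ := by omega
      calc ((r₁ - a : ℕ) : ℝ) = (((r₁ - a : ℕ) : ℤ) : ℝ) := by push_cast; ring
      _ ≤ (⌊c⌋ : ℝ) := by exact_mod_cast hZ
      _ ≤ c := Int.floor_le c
end

section
/- Let A ⊆ ℝ be convex, g: A → ℝ_{≥0} convex, and t ∈ ℝ. Define G: A^m → ℝ^{2m} by G(v) = (t + g(v_1), …, t + g(v_m), t − g(v_1), …, t − g(v_m)). Then G is strictly isotone: if v majorizes w (v, w ∈ A^m), then G(v) majorizes G(w). -/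
open Finset Matrix
open scoped Kronecker ComplexOrder

/-- slope comparison for pairs of points, both moved to the right. -/
lemma slope_pair_mono {A : Set ℝ} {φ : ℝ → ℝ} (hφ : ConvexOn ℝ A φ)
    {a b a' b' : ℝ} (ha : a ∈ A) (hb : b ∈ A) (ha' : a' ∈ A) (hb' : b' ∈ A)
    (hab : a ≠ b) (hab' : a' ≠ b') (h1 : a ≤ a') (h2 : b ≤ b') :
    (φ b - φ a) / (b - a) ≤ (φ b' - φ a') / (b' - a') := by
  have symm : ∀ p q : ℝ, (φ q - φ p) / (q - p) = (φ p - φ q) / (p - q) := by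
    intro p q
    rw [← neg_div_neg_eq]; ring_nf
  by_cases hba' : b = a'
  · subst hba'
    calc (φ b - φ a) / (b - a) = (φ a - φ b) / (a - b) := symm a b
      _ ≤ (φ b' - φ b) / (b' - b) :=
          hφ.secant_mono hb ha hb' hab hab'.symm (h1.trans h2)
  · calc (φ b - φ a) / (b - a) = (φ a - φ b) / (a - b) := symm a b
      _ ≤ (φ a' - φ b) / (a' - b) := hφ.secant_mono hb ha ha' hab (fun h => hba' h.symm) h1
      _ = (φ b - φ a') / (b - a') := (symm a' b).symm
      _ ≤ (φ b' - φ a') / (b' - a') := hφ.secant_mono ha' hb hb' hba' hab'.symm h2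

lemma abel_bound' (C D : ℕ → ℝ) (m : ℕ) (hC : Monotone C)
    (hP : ∀ k, k ≤ m → 0 ≤ ∑ i ∈ range k, D i)
    (hPm : ∑ i ∈ range m, D i = 0) :
    ∑ i ∈ range m, C i * D i ≤ 0 := by
  rcases m with _ | n
  · simp
  have claim : ∀ k, k < n + 1 → ∑ i ∈ range (k+1), C i * D i ≤ C k * ∑ i ∈ range (k+1), D i := by
    intro k
    induction k with
    | zero => intro _; simp
    | succ k ih =>
      intro hk
      have hk' : k < n + 1 := by omega
      rw [sum_range_succ, sum_range_succ (f := D)]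
      have h1 := ih hk'
      have h2 : C k * ∑ i ∈ range (k+1), D i ≤ C (k+1) * ∑ i ∈ range (k+1), D i := by
        apply mul_le_mul_of_nonneg_right (hC (Nat.le_succ k)) (hP (k+1) (by omega))
      nlinarith [h1, h2]
  have := claim n (by omega)
  rw [hPm] at this
  simpa using this

set_option maxHeartbeats 2000000 in
lemma karamata_nat {A : Set ℝ} {φ : ℝ → ℝ} (hφ : ConvexOn ℝ A φ) (m : ℕ)
    (x y : ℕ → ℝ) (hx : Monotone x) (hy : Monotone y)
    (hxA : ∀ i, i < m → x i ∈ A) (hyA : ∀ i, i < m → y i ∈ A)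
    (hk : ∀ k, k ≤ m → ∑ i ∈ range k, x i ≤ ∑ i ∈ range k, y i)
    (he : ∑ i ∈ range m, x i = ∑ i ∈ range m, y i) :
    ∑ i ∈ range m, φ (y i) ≤ ∑ i ∈ range m, φ (x i) := by
  classical
  set N : Finset ℕ := (range m).filter (fun i => x i ≠ y i) with hN
  by_cases hNe : N = ∅
  · apply le_of_eq
    apply sum_congr rfl
    intro i hi
    have : ¬ (x i ≠ y i) := by
      intro h
      have : i ∈ N := by simp [hN, mem_filter, hi, h]
      simp [hNe] at this
    rw [not_not.mp this]
  have hNne : N.Nonempty := nonempty_iff_ne_empty.mpr hNe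
  set s : ℕ → ℝ := fun i => (φ (y i) - φ (x i)) / (y i - x i) with hs
  have hmemN : ∀ i ∈ N, i < m ∧ x i ≠ y i := by
    intro i hi; rw [hN, mem_filter, mem_range] at hi; exact hi
  have smono : ∀ i ∈ N, ∀ j ∈ N, i ≤ j → s i ≤ s j := by
    intro i hi j hj hij
    obtain ⟨him, hixy⟩ := hmemN i hi
    obtain ⟨hjm, hjxy⟩ := hmemN j hj
    exact slope_pair_mono hφ (hxA i him) (hyA i him) (hxA j hjm) (hyA j hjm)
      hixy hjxy (hx hij) (hy hij)
  set c : ℕ → ℝ := fun i => (insert (N.min' hNne) (N.filter (· ≤ i))).sup'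
    (insert_nonempty _ _) s with hc
  have cmono : Monotone c := by
    intro i j hij
    apply Finset.sup'_mono
    apply insert_subset_insert
    intro a ha
    simp only [mem_filter] at ha ⊢
    exact ⟨ha.1, ha.2.trans hij⟩
  have ceq : ∀ i ∈ N, c i = s i := by
    intro i hi
    apply le_antisymm
    · apply Finset.sup'_le
      intro j hj
      rcases mem_insert.mp hj with h | h
      · subst h
        exact smono _ (N.min'_mem hNne) i hi (N.min'_le i hi)
      · rw [mem_filter] at h
        exact smono _ h.1 i hi h.2
    · apply Finset.le_sup' s
      exact mem_insert_of_mem (mem_filter.mpr ⟨hi, le_refl i⟩)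
  have pointwise : ∀ i ∈ range m, φ (y i) - φ (x i) ≤ c i * (y i - x i) := by
    intro i hi
    by_cases hxy : x i = y i
    · rw [hxy]; simp
    · have hiN : i ∈ N := by rw [hN, mem_filter]; exact ⟨hi, hxy⟩
      rw [ceq i hiN, hs]
      rw [div_mul_cancel₀]
      exact sub_ne_zero_of_ne (Ne.symm hxy)
  have key : ∑ i ∈ range m, (φ (y i) - φ (x i)) ≤ 0 := by
    calc ∑ i ∈ range m, (φ (y i) - φ (x i)) ≤ ∑ i ∈ range m, c i * (y i - x i) :=
          sum_le_sum pointwise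
      _ ≤ 0 := by
          apply abel_bound' c (fun i => y i - x i) m cmono
          · intro k hkm
            rw [sum_sub_distrib, sub_nonneg]
            exact hk k hkm
          · rw [sum_sub_distrib, sub_eq_zero]
            exact he.symm
  rw [sum_sub_distrib, sub_nonpos] at key
  exact key

lemma sum_attachFin {m : ℕ} (s : Finset ℕ) (h : ∀ n ∈ s, n < m) (F : ℕ → ℝ) :
    ∑ i ∈ s.attachFin h, F i.val = ∑ n ∈ s, F n := by
  apply Finset.sum_bij (i := fun (a : Fin m) (_ : a ∈ s.attachFin h) => a.val)
  · intro a ha; exact (mem_attachFin h).mp ha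
  · intro a ha b hb hab; exact Fin.ext hab
  · intro b hb; exact ⟨⟨b, h b hb⟩, (mem_attachFin h).mpr hb, rfl⟩
  · intro a ha; rfl

lemma mono_range_le_subset (F : ℕ → ℝ) (hF : Monotone F) (k : ℕ) :
    ∀ R : Finset ℕ, R.card = k → ∑ n ∈ range k, F n ≤ ∑ n ∈ R, F n := by
  induction k with
  | zero => intro R hR; simp [Finset.card_eq_zero.mp hR]
  | succ k ih =>
    intro R hR
    have hRne : R.Nonempty := card_pos.mp (by omega)
    set r := R.max' hRne with hr
    have hrR : r ∈ R := R.max'_mem hRne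
    have hkr : k ≤ r := by
      have : R ⊆ range (r + 1) := by
        intro a ha; rw [mem_range]; exact Nat.lt_succ_of_le (R.le_max' a ha)
      have := card_le_card this
      rw [hR, card_range] at this; omega
    have herase : (R.erase r).card = k := by rw [card_erase_of_mem hrR, hR]; omega
    calc ∑ n ∈ range (k+1), F n = ∑ n ∈ range k, F n + F k := sum_range_succ F k
      _ ≤ ∑ n ∈ R.erase r, F n + F r := add_le_add (ih _ herase) (hF hkr)
      _ = ∑ n ∈ R, F n := by rw [add_comm]; exact Finset.add_sum_erase R F hrR

lemma bridge {m : ℕ} (u : Fin m → ℝ) (σ : Equiv.Perm (Fin m)) (X : ℕ → ℝ)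
    (hX : ∀ n (h : n < m), X n = u (σ ⟨n, h⟩)) (k : ℕ) (hk : k ≤ m) :
    ∃ T : Finset (Fin m), T.card = k ∧ ∑ n ∈ range k, X n = ∑ j ∈ T, u j := by
  have hlt : ∀ n ∈ range k, n < m := fun n hn => lt_of_lt_of_le (mem_range.mp hn) hk
  refine ⟨((range k).attachFin hlt).image σ, ?_, ?_⟩
  · rw [card_image_of_injective _ σ.injective, card_attachFin, card_range]
  · rw [sum_image (fun a _ b _ hab => σ.injective hab)]
    rw [← sum_attachFin (range k) hlt X]
    apply sum_congr rfl
    intro i hi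
    have him : (i : ℕ) < m := i.isLt
    rw [hX i.val him]

lemma bridge_rev {m : ℕ} (u : Fin m → ℝ) (σ : Equiv.Perm (Fin m)) (X : ℕ → ℝ)
    (hX : ∀ n (h : n < m), X n = u (σ ⟨n, h⟩)) (Q : Finset (Fin m)) :
    ∃ R : Finset ℕ, R.card = Q.card ∧ ∑ j ∈ Q, u j = ∑ n ∈ R, X n := by
  refine ⟨(Q.image σ.symm).image Fin.val, ?_, ?_⟩
  · rw [card_image_of_injective _ Fin.val_injective,
      card_image_of_injective _ σ.symm.injective]
  · rw [sum_image (fun a _ b _ hab => Fin.val_injective hab),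
      sum_image (fun a _ b _ hab => σ.symm.injective hab)]
    apply sum_congr rfl
    intro j hj
    rw [hX _ (σ.symm j).isLt]
    congr 1
    simp

lemma karamata_fin {m : ℕ} {A : Set ℝ} {φ : ℝ → ℝ} (hφ : ConvexOn ℝ A φ)
    {v w : Fin m → ℝ} (hv : ∀ i, v i ∈ A) (hw : ∀ i, w i ∈ A)
    (hmaj : Majorizes v w) :
    ∑ i, φ (w i) ≤ ∑ i, φ (v i) := by
  rcases Nat.eq_zero_or_pos m with hm | hm
  · subst hm; simp
  set σv := Tuple.sort v with hσv
  set σw := Tuple.sort w with hσw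
  set cl : ℕ → Fin m := fun n => ⟨min n (m-1), by omega⟩ with hcl
  have clmono : Monotone cl := by
    intro a b hab
    simp only [hcl, Fin.mk_le_mk]
    exact min_le_min hab le_rfl
  have cleq : ∀ n (h : n < m), cl n = ⟨n, h⟩ := by
    intro n h; apply Fin.ext; simp only [hcl]; omega
  set x : ℕ → ℝ := fun n => v (σv (cl n)) with hx
  set y : ℕ → ℝ := fun n => w (σw (cl n)) with hy
  have hXv : ∀ n (h : n < m), x n = v (σv ⟨n, h⟩) := by
    intro n h; rw [hx]; simp only; rw [cleq n h]
  have hXw : ∀ n (h : n < m), y n = w (σw ⟨n, h⟩) := by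
    intro n h; rw [hy]; simp only; rw [cleq n h]
  have hxmono : Monotone x := (Tuple.monotone_sort v).comp clmono
  have hymono : Monotone y := (Tuple.monotone_sort w).comp clmono
  -- total sums
  have univ_of_card : ∀ T : Finset (Fin m), T.card = m → T = univ := by
    intro T hT
    apply Finset.eq_univ_of_card
    rw [hT, Fintype.card_fin]
  have hxtot : ∑ n ∈ range m, x n = ∑ i, v i := by
    obtain ⟨T, hT, hTs⟩ := bridge v σv x hXv m le_rfl
    rw [hTs, univ_of_card T hT]
  have hytot : ∑ n ∈ range m, y n = ∑ i, w i := by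
    obtain ⟨T, hT, hTs⟩ := bridge w σw y hXw m le_rfl
    rw [hTs, univ_of_card T hT]
  -- partial sums
  have hpart : ∀ k, k ≤ m → ∑ n ∈ range k, x n ≤ ∑ n ∈ range k, y n := by
    intro k hkm
    obtain ⟨T, hT, hTs⟩ := bridge w σw y hXw k hkm
    obtain ⟨S, hScard, hSle⟩ := hmaj.1 Tᶜ
    have hTc : (Tᶜ : Finset (Fin m)).card = m - k := by
      rw [card_compl, hT, Fintype.card_fin]
    have hTS : ∑ j ∈ T, w j ≥ ∑ i ∈ Sᶜ, v i := by
      have e1 : ∑ j ∈ T, w j + ∑ j ∈ Tᶜ, w j = ∑ j, w j := sum_add_sum_compl T w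
      have e2 : ∑ i ∈ S, v i + ∑ i ∈ Sᶜ, v i = ∑ i, v i := sum_add_sum_compl S v
      have := hmaj.2
      linarith
    have hSc : (Sᶜ : Finset (Fin m)).card = k := by
      rw [card_compl, hScard, hTc, Fintype.card_fin]; omega
    obtain ⟨R, hRcard, hRs⟩ := bridge_rev v σv x hXv Sᶜ
    calc ∑ n ∈ range k, x n ≤ ∑ n ∈ R, x n :=
          mono_range_le_subset x hxmono k R (by rw [hRcard, hSc])
      _ = ∑ i ∈ Sᶜ, v i := hRs.symm
      _ ≤ ∑ j ∈ T, w j := hTS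
      _ = ∑ n ∈ range k, y n := hTs.symm
  have := karamata_nat hφ m x y hxmono hymono (fun i _ => hv _) (fun i _ => hw _)
    hpart (by rw [hxtot, hytot, hmaj.2])
  -- convert back
  obtain ⟨T1, hT1, hT1s⟩ := bridge (fun j => φ (w j)) σw (fun n => φ (y n))
    (fun n h => by rw [hXw n h]) m le_rfl
  obtain ⟨T2, hT2, hT2s⟩ := bridge (fun j => φ (v j)) σv (fun n => φ (x n))
    (fun n h => by rw [hXv n h]) m le_rfl
  rw [univ_of_card T1 hT1] at hT1s
  rw [univ_of_card T2 hT2] at hT2s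
  rw [← hT1s, ← hT2s] at *
  exact this

lemma exists_topk {α : Type*} [Fintype α] [DecidableEq α] (f : α → ℝ) :
    ∀ k, k ≤ Fintype.card α →
      ∃ S : Finset α, S.card = k ∧ ∀ i ∈ S, ∀ j, j ∉ S → f j ≤ f i := by
  intro k
  induction k with
  | zero => intro _; exact ⟨∅, card_empty, by simp⟩
  | succ k ih =>
    intro hk
    obtain ⟨S, hScard, hStop⟩ := ih (by omega)
    have hcompl : (Sᶜ : Finset α).Nonempty := by
      rw [← card_pos, card_compl, hScard]; omega
    obtain ⟨j₀, hj₀mem, hj₀max⟩ := exists_max_image Sᶜ f hcompl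
    have hj₀S : j₀ ∉ S := mem_compl.mp hj₀mem
    refine ⟨insert j₀ S, ?_, ?_⟩
    · rw [card_insert_of_notMem hj₀S, hScard]
    · intro i hi j hj
      have hjS : j ∉ S := fun h => hj (mem_insert_of_mem h)
      rcases mem_insert.mp hi with h | h
      · subst h
        exact hj₀max j (mem_compl.mpr hjS)
      · exact hStop i h j hjS

lemma key_topk {m : ℕ} {A : Set ℝ} (hA : Convex ℝ A)
    {g : ℝ → ℝ} (hg : ConvexOn ℝ A g) (hg0 : ∀ a ∈ A, 0 ≤ g a)
    {v w : Fin m → ℝ} (hv : ∀ i, v i ∈ A) (hw : ∀ i, w i ∈ A)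
    (hmaj : Majorizes v w) (T : Finset (Fin m)) :
    ∃ S : Finset (Fin m), S.card = T.card ∧ ∑ j ∈ T, g (w j) ≤ ∑ i ∈ S, g (v i) := by
  classical
  set k := T.card with hk
  have hkm : k ≤ m := by have := card_le_univ T; simpa [hk, Fintype.card_fin] using this
  obtain ⟨S, hScard, hStop⟩ := exists_topk (fun i => g (v i)) k
    (by rw [Fintype.card_fin]; exact hkm)
  rcases Nat.eq_zero_or_pos k with hk0 | hkpos
  · refine ⟨∅, by rw [card_empty, hk0], ?_⟩
    have : T = ∅ := card_eq_zero.mp (by omega)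
    rw [this]; simp
  have hSne : S.Nonempty := card_pos.mp (by omega)
  set c : ℝ := S.inf' hSne (fun i => g (v i)) with hc
  set φ : ℝ → ℝ := fun u => max (g u - c) 0 with hφdef
  have hφ : ConvexOn ℝ A φ := by
    have h1 : ConvexOn ℝ A (fun u => g u - c) := hg.sub (concaveOn_const c hA)
    have h2 : ConvexOn ℝ A (fun _ => (0:ℝ)) := convexOn_const 0 hA
    exact h1.sup h2
  have hkar := karamata_fin hφ hv hw hmaj
  -- φ(v i) = g(v i) - c on S, 0 off S
  have hφvS : ∀ i ∈ S, φ (v i) = g (v i) - c := by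
    intro i hi
    apply max_eq_left
    rw [sub_nonneg, hc]
    exact Finset.inf'_le _ hi
  have hφvSc : ∀ i, i ∉ S → φ (v i) = 0 := by
    intro i hi
    apply max_eq_right
    rw [sub_nonpos, hc]
    apply Finset.le_inf'
    intro j hj
    exact hStop j hj i hi
  have hsumφv : ∑ i, φ (v i) = ∑ i ∈ S, g (v i) - k * c := by
    rw [← sum_add_sum_compl S (fun i => φ (v i))]
    rw [sum_congr rfl hφvS, sum_congr rfl (fun i hi => hφvSc i (mem_compl.mp hi))]
    rw [sum_sub_distrib, sum_const, hScard]
    simp [nsmul_eq_mul]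
  refine ⟨S, by rw [hScard, hk], ?_⟩
  have step1 : ∑ j ∈ T, g (w j) = ∑ j ∈ T, (g (w j) - c) + k * c := by
    rw [sum_sub_distrib, sum_const, ← hk]
    simp only [nsmul_eq_mul]; ring
  have step2 : ∑ j ∈ T, (g (w j) - c) ≤ ∑ j ∈ T, φ (w j) :=
    sum_le_sum (fun j _ => le_max_left _ _)
  have step3 : ∑ j ∈ T, φ (w j) ≤ ∑ j, φ (w j) := by
    apply sum_le_sum_of_subset_of_nonneg (subset_univ T)
    intro j _ _
    exact le_max_right _ _
  calc ∑ j ∈ T, g (w j) = ∑ j ∈ T, (g (w j) - c) + k * c := step1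
    _ ≤ ∑ j ∈ T, φ (w j) + k * c := by linarith
    _ ≤ ∑ j, φ (w j) + k * c := by linarith
    _ ≤ ∑ i, φ (v i) + k * c := by linarith
    _ = ∑ i ∈ S, g (v i) := by rw [hsumφv]; ring


/-- for convex `A ⊆ ℝ`, convex nonnegative `g : A → ℝ≥0` and `t ∈ ℝ`, the
map `G(v) = (t + g(v₁), …, t + g(v_m)) ⊕ (t − g(v₁), …, t − g(v_m))` is strictly
isotone: if `v` majorizes `w` then `G(v)` majorizes `G(w)`. -/
theorem isotone_G {m : ℕ} (A : Set ℝ) (hA : Convex ℝ A)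
    (g : ℝ → ℝ) (hg : ConvexOn ℝ A g) (hg0 : ∀ a ∈ A, 0 ≤ g a) (t : ℝ)
    (v w : Fin m → ℝ) (hv : ∀ i, v i ∈ A) (hw : ∀ i, w i ∈ A)
    (hmaj : Majorizes v w) :
    Majorizes
      (Sum.elim (fun i => t + g (v i)) (fun i => t - g (v i)) : Fin m ⊕ Fin m → ℝ)
      (Sum.elim (fun i => t + g (w i)) (fun i => t - g (w i)) : Fin m ⊕ Fin m → ℝ) := by
  classical
  constructor
  · intro T
    obtain ⟨T1, T2, rfl⟩ : ∃ T1 T2, T1.disjSum T2 = T :=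
      ⟨T.toLeft, T.toRight, T.toLeft_disjSum_toRight⟩
    have hj0k1 : (T1 \ T2).card ≤ T1.card := card_le_card sdiff_subset
    have hj0k2 : (T1 \ T2).card + T2.card ≤ m := by
      have h1 : ((T1 \ T2) ∪ T2).card = (T1 \ T2).card + T2.card :=
        card_union_of_disjoint sdiff_disjoint
      have h2 := card_le_univ ((T1 \ T2) ∪ T2)
      simp only [card_univ, Fintype.card_fin] at h2
      omega
    have hk1m : T1.card ≤ m := by
      have := card_le_univ T1; simpa [Fintype.card_fin] using this
    have hk2m : T2.card ≤ m := by
      have := card_le_univ T2; simpa [Fintype.card_fin] using this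
    obtain ⟨j, p, hj0j, hjm, hppk, hjpm⟩ :
        ∃ j p : ℕ, (T1 \ T2).card ≤ j ∧ j ≤ m ∧
          j + p + p = T1.card + T2.card ∧ j + p ≤ m := by
      refine ⟨(T1 \ T2).card + (T1.card + T2.card + (T1 \ T2).card) % 2,
        (T1.card + T2.card - ((T1 \ T2).card
          + (T1.card + T2.card + (T1 \ T2).card) % 2)) / 2, ?_, ?_, ?_, ?_⟩ <;> omega
    obtain ⟨S0, hS0card, hS0⟩ := key_topk hA hg hg0 hv hw hmaj (T1 \ T2)
    obtain ⟨B, hS0B, -, hBcard⟩ :=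
      exists_subsuperset_card_eq (t := univ) (n := j) (subset_univ S0)
        (by omega) (by simpa [Fintype.card_fin] using hjm)
    obtain ⟨P, hPsub, hPcard⟩ := exists_subset_card_eq (s := univ \ B) (n := p)
      (by rw [card_sdiff_of_subset (subset_univ B)]; simp only [card_univ, Fintype.card_fin]; omega)
    have hdisjBP : Disjoint B P := by
      rw [disjoint_right]
      intro a haP haB
      have := hPsub haP
      rw [mem_sdiff] at this
      exact this.2 haB
    refine ⟨(B ∪ P).disjSum P, ?_, ?_⟩
    · rw [card_disjSum, card_disjSum, card_union_of_disjoint hdisjBP, hBcard, hPcard]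
      omega
    · rw [sum_disjSum, sum_disjSum]
      simp only [Sum.elim_inl, Sum.elim_inr]
      rw [sum_add_distrib, sum_add_distrib, sum_sub_distrib, sum_sub_distrib,
        sum_const, sum_const, sum_const, sum_const, nsmul_eq_mul, nsmul_eq_mul,
        nsmul_eq_mul, nsmul_eq_mul]
      have hBP : ∑ i ∈ B ∪ P, g (v i) = ∑ i ∈ B, g (v i) + ∑ i ∈ P, g (v i) :=
        sum_union hdisjBP
      have hcore : ∑ i ∈ T1, g (w i) - ∑ i ∈ T2, g (w i) ≤ ∑ i ∈ B, g (v i) := by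
        have e1 := Finset.sum_inter_add_sum_sdiff T1 T2 (fun i => g (w i))
        have e2 : ∑ i ∈ T1 ∩ T2, g (w i) ≤ ∑ i ∈ T2, g (w i) :=
          sum_le_sum_of_subset_of_nonneg inter_subset_right
            (fun i _ _ => hg0 _ (hw i))
        have e3 : ∑ i ∈ S0, g (v i) ≤ ∑ i ∈ B, g (v i) :=
          sum_le_sum_of_subset_of_nonneg hS0B (fun i _ _ => hg0 _ (hv i))
        linarith [hS0]
      have hcards : ((B ∪ P).card : ℝ) + (P.card : ℝ) = (T1.card : ℝ) + (T2.card : ℝ) := by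
        rw [card_union_of_disjoint hdisjBP, hBcard, hPcard]
        push_cast
        have : j + p + p = T1.card + T2.card := hppk
        exact_mod_cast congrArg (Nat.cast (R := ℝ)) this
      have hct : ((B ∪ P).card : ℝ) * t + (P.card : ℝ) * t
          = (T1.card : ℝ) * t + (T2.card : ℝ) * t := by
        have := congrArg (fun z => z * t) hcards
        simp only [add_mul] at this
        exact this
      rw [hBP]
      linarith [hcore, hct]
  · simp only [Fintype.sum_sum_type, Sum.elim_inl, Sum.elim_inr,
      sum_add_distrib, sum_sub_distrib, sum_const, card_univ, Fintype.card_fin,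
      nsmul_eq_mul]
    ring
end

section
/- Let W be a partition of [n], and for each I ∈ W let f_I be a continuous, convex, unitarily invariant function on states of H_I = ⊗_{i∈I} H_i. Let p be a probability vector. Then the maximum of Σ_{I∈W} f_I(τ_I) over all states τ on H_{[n]} = ⊗_{i∈[n]} H_i with λ(τ) majorized by p is achieved at a classical state, i.e., one diagonal in a fixed product basis. -/
open Finset Matrix
open scoped Kronecker ComplexOrder

/-- Combine a configuration on the qudits in `I` with one on the qudits in `Iᶜ`. -/
def glue {n : ℕ} {dv : Fin n → ℕ} (I : Finset (Fin n))
    (a : (i : ↥I) → Fin (dv i.1)) (b : (j : ↥(Iᶜ)) → Fin (dv j.1)) :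
    (i : Fin n) → Fin (dv i) :=
  fun i => if h : i ∈ I then a ⟨i, h⟩ else b ⟨i, Finset.mem_compl.mpr h⟩

/-- The partial trace over the complement of `I` (the marginal on the qudits in `I`). -/
noncomputable def ptrace {n : ℕ} {dv : Fin n → ℕ}
    (τ : Matrix ((i : Fin n) → Fin (dv i)) ((i : Fin n) → Fin (dv i)) ℂ)
    (I : Finset (Fin n)) :
    Matrix ((i : ↥I) → Fin (dv i.1)) ((i : ↥I) → Fin (dv i.1)) ℂ :=
  Matrix.of fun a b =>
    ∑ c : (j : ↥(Iᶜ)) → Fin (dv j.1), τ (glue I a c) (glue I b c)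

/-- A quantum state: positive semi-definite with unit trace. -/
def IsState {m : Type*} [Fintype m] [DecidableEq m] (M : Matrix m m ℂ) : Prop :=
  M.PosSemidef ∧ M.trace = 1


lemma Majorizes.trans {ι κ μ : Type*} [Fintype ι] [Fintype κ] [Fintype μ]
    {x : ι → ℝ} {y : κ → ℝ} {z : μ → ℝ} (h1 : Majorizes x y) (h2 : Majorizes y z) :
    Majorizes x z := by
  refine ⟨fun t => ?_, h2.2.trans h1.2⟩
  obtain ⟨s, hs, hle⟩ := h2.1 t
  obtain ⟨r, hr, hle'⟩ := h1.1 s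
  exact ⟨r, hr.trans hs, hle.trans hle'⟩

lemma maj_aux_topk {ι : Type*} [Fintype ι] (x w : ι → ℝ)
    (h0 : ∀ i, 0 ≤ w i) (h1 : ∀ i, w i ≤ 1) (k : ℕ) (hk : ∑ i, w i = k)
    (hkc : k ≤ Fintype.card ι) :
    ∃ s : Finset ι, s.card = k ∧ ∑ i, w i * x i ≤ ∑ i ∈ s, x i := by
  classical
  obtain ⟨s, hsmem, hmax⟩ := Finset.exists_max_image
    ((Finset.univ : Finset ι).powersetCard k) (fun s => ∑ i ∈ s, x i)
    (Finset.powersetCard_nonempty.2 (by simpa using hkc))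
  obtain ⟨-, hscard⟩ := Finset.mem_powersetCard.1 hsmem
  refine ⟨s, hscard, ?_⟩
  rcases s.eq_empty_or_nonempty with rfl | hsne
  · simp only [Finset.card_empty] at hscard
    have hw : ∀ i ∈ (Finset.univ : Finset ι), w i = 0 := by
      rw [← Finset.sum_eq_zero_iff_of_nonneg (fun i _ => h0 i), hk, ← hscard]
      simp
    have hz : ∑ i, w i * x i = 0 :=
      Finset.sum_eq_zero fun i hi => by rw [hw i hi, zero_mul]
    simp [hz]
  · set m := s.inf' hsne x with hm
    have hmle : ∀ i ∈ s, m ≤ x i := fun i hi => Finset.inf'_le _ hi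
    have hout : ∀ j, j ∉ s → x j ≤ m := by
      intro j hj
      obtain ⟨i₀, hi₀, hmi₀⟩ := Finset.exists_mem_eq_inf' hsne x
      have hk1 : 1 ≤ k := hscard ▸ Finset.card_pos.2 hsne
      have hcard' : (insert j (s.erase i₀)).card = k := by
        rw [Finset.card_insert_of_notMem (fun hmem => hj (Finset.mem_of_mem_erase hmem)),
          Finset.card_erase_of_mem hi₀, hscard]
        omega
      have hmem' : insert j (s.erase i₀) ∈ (Finset.univ : Finset ι).powersetCard k :=
        Finset.mem_powersetCard.2 ⟨Finset.subset_univ _, hcard'⟩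
      have hle := hmax _ hmem'
      rw [Finset.sum_insert (fun hmem => hj (Finset.mem_of_mem_erase hmem)),
        Finset.sum_erase_eq_sub hi₀] at hle
      rw [hm, hmi₀]; linarith
    have key1 : ∀ i ∈ s, w i * x i ≤ x i + (w i - 1) * m := by
      intro i hi
      nlinarith [hmle i hi, h1 i]
    have key2 : ∀ i ∈ sᶜ, w i * x i ≤ w i * m := by
      intro i hi
      exact mul_le_mul_of_nonneg_left (hout i (Finset.mem_compl.1 hi)) (h0 i)
    have hsplit : ∑ i, w i * x i = ∑ i ∈ s, w i * x i + ∑ i ∈ sᶜ, w i * x i :=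
      (Finset.sum_add_sum_compl s _).symm
    have hwsplit : ∑ i ∈ s, w i + ∑ i ∈ sᶜ, w i = (k : ℝ) := by
      rw [Finset.sum_add_sum_compl s w, hk]
    have e1 : ∑ i ∈ s, w i * x i ≤ ∑ i ∈ s, (x i + (w i - 1) * m) :=
      Finset.sum_le_sum key1
    have e2 : ∑ i ∈ sᶜ, w i * x i ≤ ∑ i ∈ sᶜ, w i * m := Finset.sum_le_sum key2
    have e3 : ∑ i ∈ s, (x i + (w i - 1) * m) = ∑ i ∈ s, x i + (∑ i ∈ s, w i - k) * m := by
      rw [Finset.sum_add_distrib, ← Finset.sum_mul, Finset.sum_sub_distrib,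
        Finset.sum_const, ← hscard, nsmul_eq_mul, mul_one]
    have e4 : ∑ i ∈ sᶜ, w i * m = (∑ i ∈ sᶜ, w i) * m := (Finset.sum_mul _ _ _).symm
    have big : ∑ i, w i * x i ≤ ∑ i ∈ s, x i + (∑ i ∈ s, w i - k) * m + (∑ i ∈ sᶜ, w i) * m := by
      rw [hsplit]; rw [e4] at e2; rw [e3] at e1; linarith
    have hzero : (∑ i ∈ s, w i - k) * m + (∑ i ∈ sᶜ, w i) * m = 0 := by
      have h' : (∑ i ∈ s, w i - k) + ∑ i ∈ sᶜ, w i = 0 := by linarith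
      rw [← add_mul, h', zero_mul]
    linarith

lemma majorizes_of_doublyStochastic {ι : Type*} [Fintype ι] [DecidableEq ι]
    (x y : ι → ℝ) (w : ι → ι → ℝ) (h0 : ∀ i j, 0 ≤ w i j)
    (hrow : ∀ j, ∑ i, w i j = 1) (hcol : ∀ i, ∑ j, w i j = 1)
    (hy : ∀ j, y j = ∑ i, w i j * x i) : Majorizes x y := by
  constructor
  · intro t
    have hWle : ∀ i, ∑ j ∈ t, w i j ≤ 1 := fun i => by
      rw [← hcol i]
      exact Finset.sum_le_sum_of_subset_of_nonneg (Finset.subset_univ t)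
        (fun j _ _ => h0 i j)
    have hWsum : ∑ i, ∑ j ∈ t, w i j = (t.card : ℝ) := by
      rw [Finset.sum_comm]
      simp [hrow]
    obtain ⟨s, hs, hle⟩ := maj_aux_topk x (fun i => ∑ j ∈ t, w i j)
      (fun i => Finset.sum_nonneg fun j _ => h0 i j) hWle t.card hWsum
      (t.card_le_univ.trans_eq (Finset.card_univ))
    refine ⟨s, hs, ?_⟩
    calc ∑ j ∈ t, y j = ∑ j ∈ t, ∑ i, w i j * x i := Finset.sum_congr rfl fun j _ => hy j
      _ = ∑ i, (∑ j ∈ t, w i j) * x i := by rw [Finset.sum_comm]; simp [Finset.sum_mul]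
      _ ≤ ∑ i ∈ s, x i := hle
  · calc ∑ j, y j = ∑ j, ∑ i, w i j * x i := Finset.sum_congr rfl fun j _ => hy j
      _ = ∑ i, (∑ j, w i j) * x i := by rw [Finset.sum_comm]; simp [Finset.sum_mul]
      _ = ∑ i, x i := by simp [hcol]

lemma majorizes_diag_conj {m : Type*} [Fintype m] [DecidableEq m]
    (U : Matrix m m ℂ) (hU : U ∈ Matrix.unitaryGroup m ℂ) (c : m → ℝ) :
    Majorizes c (fun j =>
      ((U * Matrix.diagonal (fun i => (c i : ℂ)) * star U) j j).re) := by
  classical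
  have hrow : ∀ j, ∑ i, Complex.normSq (U j i) = 1 := by
    intro j
    have h1 : (U * star U) j j = 1 := by
      rw [Matrix.mem_unitaryGroup_iff.1 hU]; simp [Matrix.one_apply]
    have h2 : (U * star U) j j = ∑ i, (Complex.normSq (U j i) : ℂ) := by
      simp only [Matrix.mul_apply, Matrix.star_apply, Complex.star_def, Complex.mul_conj]
    have h3 := congrArg Complex.re (h2.symm.trans h1)
    simpa [Complex.re_sum] using h3
  have hcol : ∀ i, ∑ j, Complex.normSq (U j i) = 1 := by
    intro i
    have h1 : (star U * U) i i = 1 := by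
      rw [Matrix.mem_unitaryGroup_iff'.1 hU]; simp [Matrix.one_apply]
    have h2 : (star U * U) i i = ∑ j, (Complex.normSq (U j i) : ℂ) := by
      simp only [Matrix.mul_apply, Matrix.star_apply, Complex.star_def]
      congr 1; funext j
      rw [mul_comm, Complex.mul_conj]
    have h3 := congrArg Complex.re (h2.symm.trans h1)
    simpa [Complex.re_sum] using h3
  refine majorizes_of_doublyStochastic c _ (fun i j => Complex.normSq (U j i))
    (fun i j => Complex.normSq_nonneg _) (fun j => hrow j) (fun i => hcol i) ?_
  intro j
  have hentry : (U * Matrix.diagonal (fun i => (c i : ℂ)) * star U) j j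
      = ∑ i, ((Complex.normSq (U j i) * c i : ℝ) : ℂ) := by
    rw [Matrix.mul_apply]
    congr 1; funext i
    rw [Matrix.mul_diagonal, Matrix.star_apply, Complex.star_def]
    push_cast
    rw [mul_comm (U j i) ((c i : ℂ)), mul_assoc, Complex.mul_conj]
    ring
  rw [hentry, Complex.re_sum]
  simp

section Kron

variable {n : ℕ} {dv : Fin n → ℕ}

/-- Restriction of a configuration to the qudits in `I`. -/
def res (I : Finset (Fin n)) (a : (i : Fin n) → Fin (dv i)) :
    (i : ↥I) → Fin (dv i.1) := fun i => a i.1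

/-- Restriction of a configuration to the qudits outside `I`. -/
def resc (I : Finset (Fin n)) (a : (i : Fin n) → Fin (dv i)) :
    (j : ↥(Iᶜ)) → Fin (dv j.1) := fun j => a j.1

@[simp] lemma res_glue (I : Finset (Fin n)) (x : (i : ↥I) → Fin (dv i.1))
    (y : (j : ↥(Iᶜ)) → Fin (dv j.1)) : res I (glue I x y) = x := by
  funext i
  simp [res, glue, i.2]

@[simp] lemma resc_glue (I : Finset (Fin n)) (x : (i : ↥I) → Fin (dv i.1))
    (y : (j : ↥(Iᶜ)) → Fin (dv j.1)) : resc I (glue I x y) = y := by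
  funext j
  have hj : j.1 ∉ I := Finset.mem_compl.mp j.2
  simp [resc, glue, hj]

@[simp] lemma glue_res_resc (I : Finset (Fin n)) (a : (i : Fin n) → Fin (dv i)) :
    glue I (res I a) (resc I a) = a := by
  funext i
  by_cases h : i ∈ I <;> simp [glue, res, resc, h]

/-- Configurations split as a product over `I` and its complement. -/
def glueEquiv (I : Finset (Fin n)) :
    ((i : ↥I) → Fin (dv i.1)) × ((j : ↥(Iᶜ)) → Fin (dv j.1)) ≃ ((i : Fin n) → Fin (dv i)) where
  toFun xy := glue I xy.1 xy.2
  invFun a := (res I a, resc I a)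
  left_inv xy := by simp
  right_inv a := by simp

lemma sum_glue {M : Type*} [AddCommMonoid M] (I : Finset (Fin n))
    (F : ((i : Fin n) → Fin (dv i)) → M) :
    ∑ a, F a = ∑ x, ∑ y, F (glue I x y) := by
  rw [← Equiv.sum_comp (glueEquiv (dv := dv) I) F, Fintype.sum_prod_type]
  rfl

lemma glue_left_injective (I : Finset (Fin n)) {x x' : (i : ↥I) → Fin (dv i.1)}
    {y y' : (j : ↥(Iᶜ)) → Fin (dv j.1)} (h : glue I x y = glue I x' y') :
    x = x' ∧ y = y' := by
  constructor
  · have := congrArg (res I) h; simpa using this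
  · have := congrArg (resc I) h; simpa using this

/-- The Kronecker-type product of a matrix on the qudits in `I` with a matrix on the
qudits outside `I`. -/
def kron (I : Finset (Fin n))
    (P : Matrix ((i : ↥I) → Fin (dv i.1)) ((i : ↥I) → Fin (dv i.1)) ℂ)
    (Q : Matrix ((j : ↥(Iᶜ)) → Fin (dv j.1)) ((j : ↥(Iᶜ)) → Fin (dv j.1)) ℂ) :
    Matrix ((i : Fin n) → Fin (dv i)) ((i : Fin n) → Fin (dv i)) ℂ :=
  Matrix.of fun a b => P (res I a) (res I b) * Q (resc I a) (resc I b)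

lemma kron_apply (I : Finset (Fin n)) (P) (Q) (a b : (i : Fin n) → Fin (dv i)) :
    kron I P Q a b = P (res I a) (res I b) * Q (resc I a) (resc I b) := rfl

lemma kron_mul_kron (I : Finset (Fin n)) (P P' Q Q') :
    kron (dv := dv) I P Q * kron I P' Q' = kron I (P * P') (Q * Q') := by
  ext a b
  rw [Matrix.mul_apply, sum_glue I]
  simp only [kron_apply, res_glue, resc_glue, Matrix.mul_apply]
  rw [Finset.sum_mul_sum]
  congr 1; funext x; congr 1; funext y; ring

lemma kron_one_one (I : Finset (Fin n)) : kron (dv := dv) I 1 1 = 1 := by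
  ext a b
  by_cases h : a = b
  · subst h; simp [kron_apply, Matrix.one_apply]
  · have h' : ¬(res I a = res I b ∧ resc I a = resc I b) := by
      rintro ⟨h1, h2⟩
      exact h (by rw [← glue_res_resc I a, h1, h2, glue_res_resc])
    rw [kron_apply, Matrix.one_apply_ne h]
    by_cases h1 : res I a = res I b
    · have h2 : resc I a ≠ resc I b := fun h2 => h' ⟨h1, h2⟩
      rw [Matrix.one_apply_ne h2, mul_zero]
    · rw [Matrix.one_apply_ne h1, zero_mul]

lemma star_kron (I : Finset (Fin n)) (P) (Q) :
    star (kron (dv := dv) I P Q) = kron I (star P) (star Q) := by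
  ext a b
  simp [kron_apply, Matrix.star_apply, mul_comm]

lemma kron_mem_unitaryGroup (I : Finset (Fin n)) {P} {Q}
    (hP : P ∈ Matrix.unitaryGroup ((i : ↥I) → Fin (dv i.1)) ℂ)
    (hQ : Q ∈ Matrix.unitaryGroup ((j : ↥(Iᶜ)) → Fin (dv j.1)) ℂ) :
    kron (dv := dv) I P Q ∈ Matrix.unitaryGroup ((i : Fin n) → Fin (dv i)) ℂ := by
  rw [Matrix.mem_unitaryGroup_iff]
  rw [show star (kron (dv := dv) I P Q) = kron I (star P) (star Q) from star_kron I P Q]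
  rw [kron_mul_kron, Matrix.mem_unitaryGroup_iff.1 hP, Matrix.mem_unitaryGroup_iff.1 hQ,
    kron_one_one]

lemma kron_one_right_injective (I : Finset (Fin n))
    [Nonempty ((i : ↥I) → Fin (dv i.1))] {Q Q'}
    (h : kron (dv := dv) I 1 Q = kron I 1 Q') : Q = Q' := by
  ext u v
  obtain ⟨x⟩ := ‹Nonempty ((i : ↥I) → Fin (dv i.1))›
  have := congrFun (congrFun h (glue I x u)) (glue I x v)
  simpa [kron_apply, Matrix.one_apply] using this

lemma ptrace_apply (τ : Matrix ((i : Fin n) → Fin (dv i)) ((i : Fin n) → Fin (dv i)) ℂ)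
    (I : Finset (Fin n)) (a b) :
    ptrace τ I a b = ∑ c, τ (glue I a c) (glue I b c) := rfl

lemma ptrace_isHermitian {τ : Matrix ((i : Fin n) → Fin (dv i)) ((i : Fin n) → Fin (dv i)) ℂ}
    (hτ : τ.IsHermitian) (I : Finset (Fin n)) : (ptrace τ I).IsHermitian := by
  rw [Matrix.IsHermitian]
  ext a b
  rw [Matrix.conjTranspose_apply, ptrace_apply, ptrace_apply, star_sum]
  congr 1; funext c
  rw [← Matrix.conjTranspose_apply, hτ.eq]

end Kron

section Ptrace

variable {n : ℕ} {dv : Fin n → ℕ}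

lemma mul_mul_apply_aux {m : Type*} [Fintype m] (A τ B : Matrix m m ℂ) (r s : m) :
    (A * τ * B) r s = ∑ y, ∑ x, A r y * τ y x * B x s := by
  rw [Matrix.mul_apply]
  simp only [Matrix.mul_apply, Finset.sum_mul]
  rw [Finset.sum_comm]

set_option maxHeartbeats 2000000 in
lemma ptrace_conj_kron_left (I : Finset (Fin n)) (P)
    (τ : Matrix ((i : Fin n) → Fin (dv i)) ((i : Fin n) → Fin (dv i)) ℂ) :
    ptrace (kron (dv := dv) I P 1 * τ * star (kron I P 1)) I
      = P * ptrace τ I * star P := by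
  ext a b
  rw [ptrace_apply]
  have step1 : ∀ c, (kron I P 1 * τ * star (kron I P 1)) (glue I a c) (glue I b c)
      = ∑ u, ∑ v, P (res I (glue I a c)) u
          * τ (glue I u c) (glue I v c) * star P v (res I (glue I b c)) := by
    intro c
    rw [star_kron, star_one, mul_mul_apply_aux]
    rw [sum_glue I (fun y => ∑ x, kron I P 1 (glue I a c) y * τ y x * kron I (star P) 1 x (glue I b c))]
    congr 1; funext u
    rw [Finset.sum_comm]
    rw [sum_glue I (fun x => ∑ y, kron I P 1 (glue I a c) (glue I u y) * τ (glue I u y) x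
      * kron I (star P) 1 x (glue I b c))]
    congr 1; funext v
    rw [Finset.sum_comm]
    simp only [kron_apply, res_glue, resc_glue, Matrix.one_apply, mul_ite, ite_mul,
      mul_one, one_mul, mul_zero, zero_mul, Finset.sum_ite_eq, Finset.sum_ite_eq',
      Finset.mem_univ, if_true]
  rw [Finset.sum_congr rfl fun c _ => step1 c]
  simp only [res_glue]
  rw [mul_mul_apply_aux]
  rw [Finset.sum_comm]
  congr 1; funext u
  rw [Finset.sum_comm]
  congr 1; funext v
  rw [ptrace_apply, ← Finset.sum_mul, ← Finset.mul_sum]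

set_option maxHeartbeats 2000000 in
lemma ptrace_conj_kron_right (I : Finset (Fin n)) {Q}
    (hQ : Q ∈ Matrix.unitaryGroup ((j : ↥(Iᶜ)) → Fin (dv j.1)) ℂ)
    (τ : Matrix ((i : Fin n) → Fin (dv i)) ((i : Fin n) → Fin (dv i)) ℂ) :
    ptrace (kron (dv := dv) I 1 Q * τ * star (kron I 1 Q)) I = ptrace τ I := by
  ext a b
  rw [ptrace_apply]
  have step1 : ∀ c, (kron I 1 Q * τ * star (kron I 1 Q)) (glue I a c) (glue I b c)
      = ∑ d, ∑ e, Q (resc I (glue I a c)) d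
          * τ (glue I a d) (glue I b e) * star Q e (resc I (glue I b c)) := by
    intro c
    rw [star_kron, star_one, mul_mul_apply_aux]
    rw [sum_glue I (fun y => ∑ x, kron I 1 Q (glue I a c) y * τ y x * kron I (1 : Matrix _ _ ℂ) (star Q) x (glue I b c))]
    rw [Finset.sum_comm]
    congr 1; funext d
    rw [Finset.sum_comm]
    rw [sum_glue I (fun x => ∑ u, kron I 1 Q (glue I a c) (glue I u d) * τ (glue I u d) x
      * kron I (1 : Matrix _ _ ℂ) (star Q) x (glue I b c))]
    rw [Finset.sum_comm]
    congr 1; funext e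
    rw [Finset.sum_comm]
    simp only [kron_apply, res_glue, resc_glue, Matrix.one_apply, mul_ite, ite_mul,
      mul_one, one_mul, mul_zero, zero_mul, Finset.sum_ite_eq, Finset.sum_ite_eq',
      Finset.mem_univ, if_true]
  rw [Finset.sum_congr rfl fun c _ => step1 c]
  simp only [resc_glue]
  have hQ1 : ∀ e d, ∑ c, star Q e c * Q c d = (1 : Matrix _ _ ℂ) e d := by
    intro e d
    rw [← Matrix.mul_apply, Matrix.mem_unitaryGroup_iff'.1 hQ]
  calc ∑ c, ∑ d, ∑ e, Q c d * τ (glue I a d) (glue I b e) * star Q e c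
      = ∑ d, ∑ e, (∑ c, star Q e c * Q c d) * τ (glue I a d) (glue I b e) := by
        rw [Finset.sum_comm]
        congr 1; funext d
        rw [Finset.sum_comm]
        congr 1; funext e
        rw [Finset.sum_mul]
        congr 1; funext c
        ring
    _ = ∑ d, ∑ e, (1 : Matrix ((j : ↥(Iᶜ)) → Fin (dv j.1)) ((j : ↥(Iᶜ)) → Fin (dv j.1)) ℂ) e d
          * τ (glue I a d) (glue I b e) := by
        simp only [hQ1]
    _ = ∑ d, τ (glue I a d) (glue I b d) := by
        congr 1; funext d
        rw [Finset.sum_congr rfl (fun e _ => by rw [Matrix.one_apply, ite_mul, zero_mul, one_mul] :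
          ∀ e ∈ Finset.univ, (1 : Matrix ((j : ↥(Iᶜ)) → Fin (dv j.1)) _ ℂ) e d
            * τ (glue I a d) (glue I b e)
            = if e = d then τ (glue I a d) (glue I b e) else 0)]
        · rw [Finset.sum_ite_eq' Finset.univ d (fun e => τ (glue I a d) (glue I b e))]
          simp
    _ = ptrace τ I a b := (ptrace_apply τ I a b).symm

lemma ptrace_diagonal (d : ((i : Fin n) → Fin (dv i)) → ℂ) (I : Finset (Fin n)) :
    ptrace (Matrix.diagonal d) I = Matrix.diagonal (fun x => ∑ c, d (glue I x c)) := by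
  ext a b
  by_cases h : a = b
  · subst h; simp [ptrace_apply]
  · rw [ptrace_apply, Matrix.diagonal_apply_ne _ h]
    exact Finset.sum_eq_zero fun c _ =>
      Matrix.diagonal_apply_ne _ (fun hc => h (glue_left_injective I hc).1)

end Ptrace

section Disjoint

variable {n : ℕ} {dv : Fin n → ℕ}

lemma kron_disjoint {I J : Finset (Fin n)} (hdisj : Disjoint I J) (P) :
    ∃ Q, kron (dv := dv) J P 1 = kron I 1 Q := by
  classical
  have hJc : ∀ j : ↥J, j.1 ∈ Iᶜ := fun j =>
    Finset.mem_compl.mpr (Finset.disjoint_right.mp hdisj j.2)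
  refine ⟨Matrix.of fun u v =>
    P (fun j : ↥J => u ⟨j.1, hJc j⟩) (fun j : ↥J => v ⟨j.1, hJc j⟩) *
      (if ∀ j : ↥(Iᶜ), j.1 ∉ J → u j = v j then 1 else 0), ?_⟩
  ext a b
  have hiff : resc J a = resc J b ↔
      (res I a = res I b ∧ ∀ j : ↥(Iᶜ), j.1 ∉ J → resc I a j = resc I b j) := by
    constructor
    · intro h
      have hmem : ∀ i, i ∉ J → a i = b i := fun i hi =>
        congrFun h ⟨i, Finset.mem_compl.mpr hi⟩
      refine ⟨funext fun i => hmem i.1 (Finset.disjoint_left.mp hdisj i.2), ?_⟩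
      intro j hj
      exact hmem j.1 hj
    · rintro ⟨h1, h2⟩
      funext j
      have hj : j.1 ∉ J := Finset.mem_compl.mp j.2
      by_cases hI : j.1 ∈ I
      · exact congrFun h1 ⟨j.1, hI⟩
      · exact h2 ⟨j.1, Finset.mem_compl.mpr hI⟩ hj
  have hParg1 : (fun j : ↥J => resc I a ⟨j.1, hJc j⟩) = res J a := rfl
  have hParg2 : (fun j : ↥J => resc I b ⟨j.1, hJc j⟩) = res J b := rfl
  show P (res J a) (res J b) * (1 : Matrix _ _ ℂ) (resc J a) (resc J b)
      = (1 : Matrix _ _ ℂ) (res I a) (res I b) *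
        (P (fun j : ↥J => resc I a ⟨j.1, hJc j⟩) (fun j : ↥J => resc I b ⟨j.1, hJc j⟩) *
          (if ∀ j : ↥(Iᶜ), j.1 ∉ J → resc I a j = resc I b j then 1 else 0))
  rw [hParg1, hParg2, Matrix.one_apply, Matrix.one_apply]
  by_cases hc : resc J a = resc J b
  · obtain ⟨h1, h2⟩ := hiff.mp hc
    rw [if_pos hc, if_pos h1, if_pos h2]; ring
  · rw [if_neg hc, mul_zero]
    by_cases h1 : res I a = res I b
    · have h2 : ¬(∀ j : ↥(Iᶜ), j.1 ∉ J → resc I a j = resc I b j) :=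
        fun h2 => hc (hiff.mpr ⟨h1, h2⟩)
      rw [if_pos h1, if_neg h2, mul_zero, one_mul]
    · rw [if_neg h1, zero_mul]

lemma noncommProd_kron_one (I : Finset (Fin n))
    (G : Finset (Fin n) → Matrix ((i : Fin n) → Fin (dv i)) ((i : Fin n) → Fin (dv i)) ℂ) :
    ∀ (s : Finset (Finset (Fin n)))
      (comm : (↑s : Set (Finset (Fin n))).Pairwise (fun a b => Commute (G a) (G b)))
      (_ : ∀ J ∈ s, ∃ Q, G J = kron (dv := dv) I 1 Q),
      ∃ Q, s.noncommProd G comm = kron I 1 Q := by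
  classical
  intro s
  induction s using Finset.induction_on with
  | empty => exact fun comm hG => ⟨1, by rw [Finset.noncommProd_empty, kron_one_one]⟩
  | @insert a s ha ih =>
    intro comm hG
    rw [Finset.noncommProd_insert_of_notMem _ _ _ _ ha]
    obtain ⟨QA, hQA⟩ := hG a (Finset.mem_insert_self a s)
    obtain ⟨Q, hQ⟩ := ih (comm.mono (by simp only [Finset.coe_insert]; exact Set.subset_insert _ _))
      (fun J hJ => hG J (Finset.mem_insert_of_mem hJ))
    exact ⟨QA * Q, by rw [hQA, hQ, kron_mul_kron, one_mul]⟩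

end Disjoint

set_option maxHeartbeats 2000000 in
/-- for a partition `W` of `[n]` and continuous convex unitarily invariant
functions `f_I`, the maximum of `Σ_{I∈W} f_I(τ_I)` over states `τ` with `λ(τ) ⪯ p` is
achieved at a classical (diagonal in the fixed product basis) state. -/
theorem dual_problem_partition_classical_solution {n : ℕ} (dv : Fin n → ℕ)
    (W : Finset (Finset (Fin n)))
    (hWdisj : ∀ I ∈ W, ∀ J ∈ W, I ≠ J → Disjoint I J)
    (hWcover : ∀ i : Fin n, ∃ I ∈ W, i ∈ I)
    (f : (I : Finset (Fin n)) →
      Matrix ((i : ↥I) → Fin (dv i.1)) ((i : ↥I) → Fin (dv i.1)) ℂ → ℝ)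
    (hconv : ∀ I, ConvexOn ℝ Set.univ (f I)) (hcont : ∀ I, Continuous (f I))
    (hui : ∀ I : Finset (Fin n),
      ∀ U ∈ Matrix.unitaryGroup ((i : ↥I) → Fin (dv i.1)) ℂ,
      ∀ M, f I (↑U * M * star (U : Matrix _ _ ℂ)) = f I M)
    (p : ((i : Fin n) → Fin (dv i)) → ℝ) (hp0 : ∀ x, 0 ≤ p x) (hp1 : ∑ x, p x = 1) :
    ∃ τs : Matrix ((i : Fin n) → Fin (dv i)) ((i : Fin n) → Fin (dv i)) ℂ,
      τs.IsDiag ∧ IsState τs ∧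
      (∀ hH : τs.IsHermitian, Majorizes p hH.eigenvalues) ∧
      ∀ τ : Matrix ((i : Fin n) → Fin (dv i)) ((i : Fin n) → Fin (dv i)) ℂ,
        IsState τ → (∀ hH : τ.IsHermitian, Majorizes p hH.eigenvalues) →
        ∑ I ∈ W, f I (ptrace τ I) ≤ ∑ I ∈ W, f I (ptrace τs I) := by
  classical
  by_cases hne : Nonempty ((i : Fin n) → Fin (dv i))
  swap
  · rw [not_nonempty_iff] at hne
    rw [Finset.univ_eq_empty, Finset.sum_empty] at hp1
    exact absurd hp1 (by norm_num)
  haveI : Nonempty ((i : Fin n) → Fin (dv i)) := hne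
  have hneI : ∀ I : Finset (Fin n), Nonempty ((i : ↥I) → Fin (dv i.1)) :=
    fun I => ⟨res I (Classical.arbitrary _)⟩
  set K : Set (((i : Fin n) → Fin (dv i)) → ℝ) :=
    {q | (∀ x, 0 ≤ q x) ∧ Majorizes p q} with hK
  set g : (((i : Fin n) → Fin (dv i)) → ℝ) → ℝ :=
    fun q => ∑ I ∈ W, f I (ptrace (Matrix.diagonal fun x => ((q x : ℝ) : ℂ)) I) with hg
  -- K is compact
  have hKclosed : IsClosed K := by
    have h1 : IsClosed {q : ((i : Fin n) → Fin (dv i)) → ℝ | ∀ x, 0 ≤ q x} := by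
      have he : {q : ((i : Fin n) → Fin (dv i)) → ℝ | ∀ x, 0 ≤ q x}
          = ⋂ x, {q : ((i : Fin n) → Fin (dv i)) → ℝ | 0 ≤ q x} := by
        ext q; simp [Set.mem_iInter]
      rw [he]
      exact isClosed_iInter fun x => isClosed_le continuous_const (continuous_apply x)
    have h2 : IsClosed {q : ((i : Fin n) → Fin (dv i)) → ℝ |
        ∀ t : Finset ((i : Fin n) → Fin (dv i)), ∃ s : Finset ((i : Fin n) → Fin (dv i)),
          s.card = t.card ∧ ∑ j ∈ t, q j ≤ ∑ i ∈ s, p i} := by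
      have he : {q : ((i : Fin n) → Fin (dv i)) → ℝ |
          ∀ t : Finset ((i : Fin n) → Fin (dv i)), ∃ s : Finset ((i : Fin n) → Fin (dv i)),
            s.card = t.card ∧ ∑ j ∈ t, q j ≤ ∑ i ∈ s, p i}
          = ⋂ t : Finset ((i : Fin n) → Fin (dv i)),
              ⋃ s ∈ {s : Finset ((i : Fin n) → Fin (dv i)) | s.card = t.card},
                {q : ((i : Fin n) → Fin (dv i)) → ℝ | ∑ j ∈ t, q j ≤ ∑ i ∈ s, p i} := by
        ext q; simp only [Set.mem_setOf_eq, Set.mem_iInter, Set.mem_iUnion]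
        constructor
        · intro h t; obtain ⟨s, hs1, hs2⟩ := h t; exact ⟨s, hs1, hs2⟩
        · intro h t; obtain ⟨s, hs1, hs2⟩ := h t; exact ⟨s, hs1, hs2⟩
      rw [he]
      exact isClosed_iInter fun t => (Set.toFinite _).isClosed_biUnion fun s _ =>
        isClosed_le (continuous_finset_sum _ fun j _ => continuous_apply j) continuous_const
    have h3 : IsClosed {q : ((i : Fin n) → Fin (dv i)) → ℝ | ∑ j, q j = ∑ i, p i} :=
      isClosed_eq (continuous_finset_sum _ fun j _ => continuous_apply j) continuous_const
    have he : K = {q : ((i : Fin n) → Fin (dv i)) → ℝ | ∀ x, 0 ≤ q x}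
        ∩ ({q : ((i : Fin n) → Fin (dv i)) → ℝ |
            ∀ t : Finset ((i : Fin n) → Fin (dv i)), ∃ s : Finset ((i : Fin n) → Fin (dv i)),
              s.card = t.card ∧ ∑ j ∈ t, q j ≤ ∑ i ∈ s, p i}
          ∩ {q : ((i : Fin n) → Fin (dv i)) → ℝ | ∑ j, q j = ∑ i, p i}) := by
      ext q
      simp only [hK, Set.mem_setOf_eq, Set.mem_inter_iff, Majorizes]
      try tauto
    rw [he]
    exact h1.inter (h2.inter h3)
  have hKsub : K ⊆ Set.pi Set.univ (fun _ => Set.Icc (0:ℝ) 1) := by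
    rintro q ⟨hq0, hqmaj⟩ x _
    refine ⟨hq0 x, ?_⟩
    have hsum : ∑ y, q y = 1 := by rw [hqmaj.2, hp1]
    calc q x ≤ ∑ y, q y := Finset.single_le_sum (fun y _ => hq0 y) (Finset.mem_univ x)
      _ = 1 := hsum
  have hKbdd : Bornology.IsBounded K :=
    ((isCompact_univ_pi fun _ => isCompact_Icc).isBounded).subset hKsub
  have hKcompact : IsCompact K := Metric.isCompact_of_isClosed_isBounded hKclosed hKbdd
  have hpK : p ∈ K := ⟨hp0, ⟨fun t => ⟨t, rfl, le_refl _⟩, rfl⟩⟩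
  -- g is continuous
  have hgcont : Continuous g := by
    refine continuous_finset_sum _ fun I _ => (hcont I).comp ?_
    refine continuous_matrix fun a b => ?_
    show Continuous fun q : ((i : Fin n) → Fin (dv i)) → ℝ =>
      ∑ c, (Matrix.diagonal fun x => ((q x : ℝ) : ℂ)) (glue I a c) (glue I b c)
    refine continuous_finset_sum _ fun c _ => ?_
    by_cases h : glue I a c = glue I b c
    · simp only [Matrix.diagonal_apply, if_pos h]
      exact Complex.continuous_ofReal.comp (continuous_apply _)
    · simp only [Matrix.diagonal_apply, if_neg h]
      exact continuous_const
  obtain ⟨qs, hqsK, hqsmax⟩ := hKcompact.exists_isMaxOn ⟨p, hpK⟩ hgcont.continuousOn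
  refine ⟨Matrix.diagonal (fun x => ((qs x : ℝ) : ℂ)), Matrix.isDiag_diagonal _, ⟨?_, ?_⟩, ?_, ?_⟩
  · -- PosSemidef
    exact Matrix.PosSemidef.diagonal fun x => Complex.zero_le_real.mpr (hqsK.1 x)
  · -- trace
    have hsum : ∑ x, qs x = 1 := by rw [hqsK.2.2, hp1]
    rw [Matrix.trace_diagonal, ← Complex.ofReal_sum, hsum, Complex.ofReal_one]
  · -- majorization for τs
    intro hH
    refine Majorizes.trans hqsK.2 ?_
    set E := Matrix.IsHermitian.eigenvectorUnitary hH with hE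
    have hkey := majorizes_diag_conj (star (E : Matrix _ _ ℂ))
      (Unitary.star_mem E.2) qs
    have hrw : star (E : Matrix _ _ ℂ) * Matrix.diagonal (fun x => ((qs x : ℝ) : ℂ))
        * star (star (E : Matrix _ _ ℂ))
        = Matrix.diagonal (fun x => ((hH.eigenvalues x : ℝ) : ℂ)) := by
      rw [star_star]
      have h := Matrix.IsHermitian.conjStarAlgAut_star_eigenvectorUnitary hH
      rw [Unitary.conjStarAlgAut_star_apply] at h
      exact h
    rw [hrw] at hkey
    have hfun : (fun j => ((Matrix.diagonal (fun x => ((hH.eigenvalues x : ℝ) : ℂ))) j j).re)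
        = hH.eigenvalues := by
      funext j
      rw [Matrix.diagonal_apply_eq, Complex.ofReal_re]
    rwa [hfun] at hkey
  · -- the bound
    intro τ hτstate hτfeas
    obtain ⟨hτpsd, hτtr⟩ := hτstate
    have hτH : τ.IsHermitian := hτpsd.isHermitian
    have hPtH : ∀ I : Finset (Fin n), (ptrace τ I).IsHermitian :=
      fun I => ptrace_isHermitian hτH I
    set G : Finset (Fin n) → Matrix ((i : Fin n) → Fin (dv i)) ((i : Fin n) → Fin (dv i)) ℂ :=
      fun I =>
        kron I (star ((Matrix.IsHermitian.eigenvectorUnitary (hPtH I) : Matrix _ _ ℂ))) 1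
      with hGdef
    have hGmem : ∀ I, G I ∈ Matrix.unitaryGroup ((i : Fin n) → Fin (dv i)) ℂ := fun I =>
      kron_mem_unitaryGroup I
        (Unitary.star_mem (Matrix.IsHermitian.eigenvectorUnitary (hPtH I)).2) (one_mem _)
    have hcomm : (↑W : Set (Finset (Fin n))).Pairwise fun I J => Commute (G I) (G J) := by
      intro I hI J hJ hIJ
      obtain ⟨Q, hQ⟩ := kron_disjoint (hWdisj I hI J hJ hIJ)
        (star ((Matrix.IsHermitian.eigenvectorUnitary (hPtH J) : Matrix ((i : ↥J) → Fin (dv i.1)) ((i : ↥J) → Fin (dv i.1)) ℂ)))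
      show G I * G J = G J * G I
      rw [hGdef]
      simp only
      rw [hQ, kron_mul_kron, kron_mul_kron, mul_one, one_mul, mul_one, one_mul]
    set U : Matrix ((i : Fin n) → Fin (dv i)) ((i : Fin n) → Fin (dv i)) ℂ :=
      W.noncommProd G hcomm with hUdef
    have hUmem : U ∈ Matrix.unitaryGroup ((i : Fin n) → Fin (dv i)) ℂ :=
      Submonoid.noncommProd_mem _ W G hcomm (fun I _ => hGmem I)
    set τ' : Matrix ((i : Fin n) → Fin (dv i)) ((i : Fin n) → Fin (dv i)) ℂ :=
      U * τ * star U with hτ'def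
    have hτ'psd : τ'.PosSemidef := by
      have h := hτpsd.mul_mul_conjTranspose_same U
      rwa [← Matrix.star_eq_conjTranspose] at h
    have hτ'H : τ'.IsHermitian := hτ'psd.isHermitian
    set qτ : ((i : Fin n) → Fin (dv i)) → ℝ := fun x => (τ' x x).re with hqτdef
    have hqτdiag : ∀ x, ((qτ x : ℝ) : ℂ) = τ' x x := fun x => hτ'H.coe_re_apply_self x
    have hqτ0 : ∀ x, 0 ≤ qτ x := by
      intro x
      have h := hτ'psd.dotProduct_mulVec_nonneg (Pi.single x 1)
      have hval : dotProduct (star (Pi.single x (1:ℂ))) (τ' *ᵥ Pi.single x 1) = τ' x x := by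
        simp [Matrix.mulVec_single, dotProduct, Pi.single_apply, apply_ite,
          ite_mul, mul_ite]
      rw [hval] at h
      have := (Complex.le_def.mp h).1
      simpa using this
    have hqτK : qτ ∈ K := by
      refine ⟨hqτ0, (hτfeas hτH).trans ?_⟩
      have hkey := majorizes_diag_conj
        (U * (Matrix.IsHermitian.eigenvectorUnitary hτH : Matrix _ _ ℂ))
        (mul_mem hUmem (Matrix.IsHermitian.eigenvectorUnitary hτH).2) hτH.eigenvalues
      have hrw : U * (Matrix.IsHermitian.eigenvectorUnitary hτH : Matrix _ _ ℂ)
          * Matrix.diagonal (fun i => ((hτH.eigenvalues i : ℝ) : ℂ))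
          * star (U * (Matrix.IsHermitian.eigenvectorUnitary hτH : Matrix _ _ ℂ)) = τ' := by
        rw [hτ'def]
        have hsp' : τ = (Matrix.IsHermitian.eigenvectorUnitary hτH : Matrix _ _ ℂ)
            * Matrix.diagonal (fun i => ((hτH.eigenvalues i : ℝ) : ℂ))
            * star (Matrix.IsHermitian.eigenvectorUnitary hτH : Matrix _ _ ℂ) :=
          hτH.spectral_theorem
        rw [Matrix.star_mul]
        conv_rhs => rw [hsp']
        simp only [Matrix.mul_assoc]
      rw [hrw] at hkey
      exact hkey
    -- the objective is unchanged
    have hobj : ∀ I ∈ W, f I (ptrace (Matrix.diagonal fun x => ((qτ x : ℝ) : ℂ)) I)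
        = f I (ptrace τ I) := by
      intro I hIW
      set E : Matrix ((i : ↥I) → Fin (dv i.1)) ((i : ↥I) → Fin (dv i.1)) ℂ :=
        (Matrix.IsHermitian.eigenvectorUnitary (hPtH I) : Matrix ((i : ↥I) → Fin (dv i.1)) ((i : ↥I) → Fin (dv i.1)) ℂ) with hEdef
      set DI : Matrix ((i : ↥I) → Fin (dv i.1)) ((i : ↥I) → Fin (dv i.1)) ℂ :=
        Matrix.diagonal (fun x => (((hPtH I).eigenvalues x : ℝ) : ℂ)) with hDIdef
      -- decompose U
      have hins : W = insert I (W.erase I) := (Finset.insert_erase hIW).symm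
      have hcomm2 : (↑(insert I (W.erase I)) : Set (Finset (Fin n))).Pairwise
          fun I J => Commute (G I) (G J) := by rw [← hins]; exact hcomm
      have hUeq : U = G I * (W.erase I).noncommProd G
          (hcomm.mono (Finset.coe_subset.mpr (Finset.erase_subset I W))) := by
        rw [hUdef, Finset.noncommProd_congr hins (fun x _ => rfl) hcomm]
        exact Finset.noncommProd_insert_of_notMem _ _ _ _ (Finset.notMem_erase I W)
      set R : Matrix ((i : Fin n) → Fin (dv i)) ((i : Fin n) → Fin (dv i)) ℂ :=
        (W.erase I).noncommProd G
          (hcomm.mono (Finset.coe_subset.mpr (Finset.erase_subset I W))) with hRdef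
      have hRmem : R ∈ Matrix.unitaryGroup ((i : Fin n) → Fin (dv i)) ℂ :=
        Submonoid.noncommProd_mem _ _ G _ (fun J _ => hGmem J)
      obtain ⟨Q, hRQ⟩ := noncommProd_kron_one I G (W.erase I)
        (hcomm.mono (Finset.coe_subset.mpr (Finset.erase_subset I W)))
        (fun J hJ => kron_disjoint
          (hWdisj I hIW J (Finset.mem_of_mem_erase hJ)
            (Ne.symm (Finset.ne_of_mem_erase hJ))) _)
      haveI : Nonempty ((i : ↥I) → Fin (dv i.1)) := hneI I
      have hQmem : Q ∈ Matrix.unitaryGroup ((j : ↥(Iᶜ)) → Fin (dv j.1)) ℂ := by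
        rw [Matrix.mem_unitaryGroup_iff']
        refine kron_one_right_injective I ?_
        calc kron I 1 (star Q * Q)
            = star (kron I 1 Q) * kron I 1 Q := by
              rw [star_kron, star_one, kron_mul_kron, one_mul]
          _ = star R * R := by rw [hRdef, hRQ]
          _ = 1 := Matrix.mem_unitaryGroup_iff'.mp hRmem
          _ = kron I 1 1 := (kron_one_one I).symm
      -- marginals
      have hptrace1 : ptrace (R * τ * star R) I = ptrace τ I := by
        rw [hRdef, hRQ]; exact ptrace_conj_kron_right I hQmem τ
      have hτ'eq : τ' = kron I (star E) 1 * (R * τ * star R) * star (kron I (star E) 1) := by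
        rw [hτ'def, hUeq, Matrix.star_mul]
        have hGI : G I = kron I (star E) 1 := rfl
        rw [hGI]
        simp only [Matrix.mul_assoc]
      have hptrace2 : ptrace τ' I = DI := by
        rw [hτ'eq, ptrace_conj_kron_left, hptrace1, star_star]
        have := Matrix.IsHermitian.conjStarAlgAut_star_eigenvectorUnitary (hPtH I)
        rw [Unitary.conjStarAlgAut_star_apply] at this
        rw [hDIdef]
        calc star E * ptrace τ I * E
            = Matrix.diagonal (RCLike.ofReal ∘ (hPtH I).eigenvalues) := this
          _ = Matrix.diagonal (fun x => (((hPtH I).eigenvalues x : ℝ) : ℂ)) := rfl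
      have hptrace3 : ptrace (Matrix.diagonal fun x => ((qτ x : ℝ) : ℂ)) I = ptrace τ' I := by
        have hd : (fun x => ((qτ x : ℝ) : ℂ)) = fun x => τ' x x := funext hqτdiag
        rw [hd, ptrace_diagonal]
        ext a b
        by_cases h : a = b
        · subst h
          rw [Matrix.diagonal_apply_eq, ptrace_apply]
        · rw [Matrix.diagonal_apply_ne _ h, hptrace2, hDIdef, Matrix.diagonal_apply_ne _ h]
      -- unitary invariance
      have hsp := (hPtH I).spectral_theorem
      have hfD : f I (ptrace τ I) = f I DI := by
        have h1 : ptrace τ I = E * DI * star E := by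
          rw [hsp, hEdef, hDIdef]
          rfl
        rw [h1]
        exact hui I (Matrix.IsHermitian.eigenvectorUnitary (hPtH I))
          (Matrix.IsHermitian.eigenvectorUnitary (hPtH I)).2 DI
      rw [hptrace3, hptrace2, ← hfD]
    have hle : g qτ ≤ g qs := isMaxOn_iff.mp hqsmax qτ hqτK
    calc ∑ I ∈ W, f I (ptrace τ I)
        = g qτ := (Finset.sum_congr rfl fun I hI => (hobj I hI).symm)
      _ ≤ g qs := hle
      _ = ∑ I ∈ W, f I (ptrace (Matrix.diagonal fun x => ((qs x : ℝ) : ℂ)) I) := rfl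
end
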